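/- Let G be a torsion-free group in which roots are unique, and let x, y in G be such that x^k = y^m for some nonzero integers k and m. Then the subgroup generated by x and y is cyclic. -/

import Mathlib

/-- The December 2024 Mathlib definition, removed since: every nontrivial element has infinite order. -/
def Monoid.IsTorsionFree (G : Type*) [Monoid G] : Prop :=
  ∀ g : G, g ≠ 1 → ¬IsOfFinOrder g

theorem cyclic_of_common_power {G : Type*} [Group G]
    (htf : Monoid.IsTorsionFree G)
    (huniq : ∀ (a b : G) (m : ℤ), m ≠ 0 → a ^ m = b ^ m → a = b)
    (x y : G) (k m : ℤ) (hk : k ≠ 0) (hm : m ≠ 0) (h : x ^ k = y ^ m) :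
    IsCyclic (Subgroup.closure ({x, y} : Set G)) := by
  by_cases hy1 : y = 1
  · have hx1 : x = 1 := huniq x 1 k hk (by simp [hy1] at h ⊢; simp [h])
    have hset : ({x, y} : Set G) = {1} := by simp [hx1, hy1]
    rw [hset, Subgroup.closure_singleton_one]
    infer_instance
  · -- y has infinite order
    have hinj : Function.Injective fun t : ℤ => y ^ t :=
      injective_zpow_iff_not_isOfFinOrder.mpr (htf y hy1)
    -- x and y commute
    have hcomm : Commute x y := by
      have hc : (y * x * y⁻¹) ^ k = x ^ k := by
        have he : y * x * y⁻¹ = (MulAut.conj y) x := rfl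
        rw [he, ← map_zpow, h]
        simp only [MulAut.conj_apply]
        group
      have h2 := huniq _ _ k hk hc
      exact (mul_inv_eq_iff_eq_mul.mp h2).symm
    -- every element of the closure has the form x^a * y^b
    have hform : ∀ g ∈ Subgroup.closure ({x, y} : Set G), ∃ a b : ℤ, g = x ^ a * y ^ b := by
      intro g hg
      induction hg using Subgroup.closure_induction with
      | mem g hg =>
        rcases hg with rfl | rfl
        · exact ⟨1, 0, by simp⟩
        · exact ⟨0, 1, by simp⟩
      | one => exact ⟨0, 0, by simp⟩
      | mul g₁ g₂ _ _ ih₁ ih₂ =>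
        obtain ⟨a, b, rfl⟩ := ih₁
        obtain ⟨c, d, rfl⟩ := ih₂
        refine ⟨a + c, b + d, ?_⟩
        rw [zpow_add, zpow_add]
        have h1 : Commute (y ^ b) (x ^ c) := hcomm.symm.zpow_zpow b c
        rw [mul_assoc, ← mul_assoc (y ^ b), h1.eq]
        group
      | inv g _ ih =>
        obtain ⟨a, b, rfl⟩ := ih
        refine ⟨-a, -b, ?_⟩
        have h1 : Commute (x ^ a) (y ^ b) := hcomm.zpow_zpow a b
        rw [mul_inv_rev, zpow_neg, zpow_neg]
        exact h1.inv_inv.eq.symm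
    set H := Subgroup.closure ({x, y} : Set G) with hH
    -- any two elements of H commute
    have hcommH : ∀ g₁ g₂ : H, Commute (g₁ : G) (g₂ : G) := by
      rintro ⟨g₁, hg₁⟩ ⟨g₂, hg₂⟩
      obtain ⟨a, b, rfl⟩ := hform g₁ hg₁
      obtain ⟨c, d, rfl⟩ := hform g₂ hg₂
      have h1 : Commute (x ^ a) (x ^ c * y ^ d) :=
        ((Commute.refl x).zpow_zpow a c).mul_right (hcomm.zpow_zpow a d)
      have h2 : Commute (y ^ b) (x ^ c * y ^ d) :=
        (hcomm.symm.zpow_zpow b c).mul_right ((Commute.refl y).zpow_zpow b d)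
      exact h1.mul_left h2
    -- every element of H, raised to k, is a power of y
    have hexists : ∀ g : H, ∃ t : ℤ, (g : G) ^ k = y ^ t := by
      rintro ⟨g, hg⟩
      obtain ⟨a, b, rfl⟩ := hform g hg
      refine ⟨m * a + k * b, ?_⟩
      have h1 : Commute (x ^ a) (y ^ b) := hcomm.zpow_zpow a b
      rw [h1.mul_zpow, ← zpow_mul, ← zpow_mul, mul_comm a k, zpow_mul, h,
        ← zpow_mul, mul_comm b k, ← zpow_add]
    choose t ht using hexists
    -- build an injective monoid hom from H to Multiplicative ℤ
    let f : H →* Multiplicative ℤ :=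
      { toFun := fun g => Multiplicative.ofAdd (t g)
        map_one' := by
          have : y ^ t (1 : H) = y ^ (0 : ℤ) := by
            rw [← ht 1]; simp
          exact congrArg Multiplicative.ofAdd (hinj this)
        map_mul' := by
          intro g₁ g₂
          have hmul : y ^ t (g₁ * g₂) = y ^ (t g₁ + t g₂) := by
            rw [← ht (g₁ * g₂), zpow_add, ← ht g₁, ← ht g₂]
            push_cast
            exact (hcommH g₁ g₂).mul_zpow k
          exact congrArg Multiplicative.ofAdd (hinj hmul) }
    have hfinj : Function.Injective f := by
      intro g₁ g₂ hfg
      have hteq : t g₁ = t g₂ := hfg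
      have : (g₁ : G) ^ k = (g₂ : G) ^ k := by rw [ht g₁, ht g₂, hteq]
      exact Subtype.ext (huniq _ _ k hk this)
    have : IsCyclic f.range := Subgroup.isCyclic f.range
    exact isCyclic_of_surjective (MonoidHom.ofInjective hfinj).symm
      (MonoidHom.ofInjective hfinj).symm.surjective
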